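/- Fix γ > 0 and let n satisfy γ·(2n−1) > 1 (so that the connectivity bound forces min cuts of size at least 2 on clusters of 2n nodes). If a network N contains a component consisting of two disjoint n-cliques A and B joined by a single edge, then in every CPM(γ)-optimal clustering of N, every cluster intersecting this component is a subset of A or of B, and in fact A and B are each returned as clusters. Thus CPM(γ) satisfies the Pair-of-Cliques axiom. -/

import Mathlib

open Finset
open scoped Classical

/-- Edges of `E` lying inside the vertex set `c`. -/
noncomputable def inEdges {V : Type*} [DecidableEq V]
    (E : Finset (Sym2 V)) (c : Finset V) : Finset (Sym2 V) :=
  E.filter (fun e => ∀ v ∈ e, v ∈ c)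

/-- The CPM(γ) score of a clustering `P` of the graph with edge set `E`. -/
noncomputable def cpm {V : Type*} [Fintype V] [DecidableEq V] (γ : ℝ)
    (E : Finset (Sym2 V)) (P : Finpartition (univ : Finset V)) : ℝ :=
  ∑ c ∈ P.parts, (((inEdges E c).card : ℝ) - γ * (c.card.choose 2))


/-- The clique edge set on a vertex set `c`. -/
noncomputable def cliqueEdges {V : Type*} [Fintype V] [DecidableEq V]
    (c : Finset V) : Finset (Sym2 V) :=
  univ.filter (fun e : Sym2 V => ¬ e.IsDiag ∧ ∀ v ∈ e, v ∈ c)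

lemma choose2_add (x y : ℕ) : (x + y).choose 2 = x.choose 2 + y.choose 2 + x * y := by
  induction y with
  | zero => simp
  | succ y ih =>
    have h1 : x + (y+1) = (x+y) + 1 := by ring
    rw [h1]
    rw [Nat.choose_succ_succ (x+y) 1, Nat.choose_one_right, ih,
      Nat.choose_succ_succ y 1, Nat.choose_one_right]
    ring

lemma sum_choose2_le {ι : Type*} (s : Finset ι) (f : ι → ℕ) :
    ∑ i ∈ s, (f i).choose 2 ≤ (∑ i ∈ s, f i).choose 2 := by
  induction s using Finset.cons_induction with
  | empty => simp
  | cons a s ha ih =>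
    rw [Finset.sum_cons, Finset.sum_cons, choose2_add]
    omega

lemma sum_choose2_bound {ι : Type*} (s : Finset ι) (f : ι → ℕ) {c₀ : ι} (h : c₀ ∈ s) :
    (∑ i ∈ s, (f i).choose 2) + f c₀ * ((∑ i ∈ s, f i) - f c₀) ≤ (∑ i ∈ s, f i).choose 2 := by
  have e1 : ∑ i ∈ s, f i = f c₀ + ∑ i ∈ s.erase c₀, f i :=
    (Finset.add_sum_erase _ _ h).symm
  have e2 : ∑ i ∈ s, (f i).choose 2 = (f c₀).choose 2 + ∑ i ∈ s.erase c₀, (f i).choose 2 :=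
    (Finset.add_sum_erase _ _ h).symm
  have h3 := sum_choose2_le (s.erase c₀) f
  have h4 := choose2_add (f c₀) (∑ i ∈ s.erase c₀, f i)
  rw [e1, e2, Nat.add_sub_cancel_left]
  omega

lemma sym2_exists_mem {V : Type*} (e : Sym2 V) : ∃ v, v ∈ e := by
  induction e using Sym2.inductionOn with
  | hf x y => exact ⟨x, Sym2.mem_mk_left x y⟩

lemma mem_cliqueEdges {V : Type*} [Fintype V] [DecidableEq V] {t : Finset V} {e : Sym2 V} :
    e ∈ cliqueEdges t ↔ ¬ e.IsDiag ∧ ∀ v ∈ e, v ∈ t := by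
  simp [cliqueEdges]

lemma cliqueEdges_eq_image {V : Type*} [Fintype V] [DecidableEq V] (t : Finset V) :
    cliqueEdges t = t.offDiag.image Sym2.mk.uncurry := by
  ext e
  induction e using Sym2.inductionOn with
  | hf x y =>
    simp only [mem_cliqueEdges, Finset.mem_image, Finset.mem_offDiag, Sym2.isDiag_iff_proj_eq,
      Sym2.mem_iff]
    constructor
    · rintro ⟨hd, hv⟩
      exact ⟨(x, y), ⟨hv x (Or.inl rfl), hv y (Or.inr rfl), hd⟩, rfl⟩
    · rintro ⟨⟨p, q⟩, ⟨hp, hq, hpq⟩, he⟩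
      replace he : s((p, q).1, (p, q).2) = s((x, y).1, (x, y).2) := he
      rw [Sym2.mk_eq_mk_iff] at he
      rcases he with he | he <;> rw [Prod.ext_iff] at he <;>
        obtain ⟨h1, h2⟩ := he <;> subst h1 <;> subst h2
      · exact ⟨hpq, by rintro v (rfl | rfl) <;> assumption⟩
      · exact ⟨fun h => hpq h.symm, by rintro v (rfl | rfl) <;> assumption⟩

lemma card_cliqueEdges {V : Type*} [Fintype V] [DecidableEq V] (t : Finset V) :
    (cliqueEdges t).card = t.card.choose 2 := by
  rw [cliqueEdges_eq_image, Sym2.card_image_offDiag]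

lemma inEdges_cliqueEdges {V : Type*} [Fintype V] [DecidableEq V] (t c : Finset V) :
    inEdges (cliqueEdges t) c = cliqueEdges (t ∩ c) := by
  ext e
  simp only [inEdges, Finset.mem_filter, mem_cliqueEdges, Finset.mem_inter]
  constructor
  · rintro ⟨⟨hd, ht⟩, hc⟩
    exact ⟨hd, fun v hv => ⟨ht v hv, hc v hv⟩⟩
  · rintro ⟨hd, h⟩
    exact ⟨⟨hd, fun v hv => (h v hv).1⟩, fun v hv => (h v hv).2⟩

lemma mem_inEdges {V : Type*} [DecidableEq V] {X : Finset (Sym2 V)} {c : Finset V}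
    {e : Sym2 V} : e ∈ inEdges X c ↔ e ∈ X ∧ ∀ v ∈ e, v ∈ c := by
  unfold inEdges
  exact Finset.mem_filter

lemma inEdges_subset {V : Type*} [DecidableEq V] (X : Finset (Sym2 V)) (c : Finset V) :
    inEdges X c ⊆ X := by
  unfold inEdges
  exact Finset.filter_subset _ _

lemma inEdges_union {V : Type*} [DecidableEq V] (X Y : Finset (Sym2 V)) (c : Finset V) :
    inEdges (X ∪ Y) c = inEdges X c ∪ inEdges Y c :=
  Finset.filter_union _ _ _

lemma inEdges_singleton {V : Type*} [DecidableEq V] (x y : V) (c : Finset V) :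
    (inEdges {s(x, y)} c).card = if x ∈ c ∧ y ∈ c then 1 else 0 := by
  rw [inEdges, Finset.filter_singleton]
  have h : (∀ v ∈ s(x, y), v ∈ c) ↔ (x ∈ c ∧ y ∈ c) := by
    constructor
    · intro h; exact ⟨h x (Sym2.mem_mk_left x y), h y (Sym2.mem_mk_right x y)⟩
    · rintro ⟨h1, h2⟩ v hv
      rcases Sym2.mem_iff.1 hv with rfl | rfl <;> assumption
  split_ifs with h1 h2 h2 <;> simp_all

lemma inEdges_empty_right {V : Type*} [DecidableEq V] (X : Finset (Sym2 V)) :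
    inEdges X (∅ : Finset V) = ∅ := by
  rw [inEdges, Finset.filter_eq_empty_iff]
  intro e _
  obtain ⟨v, hv⟩ := sym2_exists_mem e
  exact fun h => absurd (h v hv) (Finset.notMem_empty v)

/-- per-part score -/
noncomputable def gfun {V : Type*} [Fintype V] [DecidableEq V] (γ : ℝ)
    (E : Finset (Sym2 V)) (c : Finset V) : ℝ :=
  ((inEdges E c).card : ℝ) - γ * (c.card.choose 2)

lemma cpm_eq {V : Type*} [Fintype V] [DecidableEq V] (γ : ℝ)
    (E : Finset (Sym2 V)) (P : Finpartition (univ : Finset V)) :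
    cpm γ E P = ∑ c ∈ P.parts, gfun γ E c := rfl

lemma gfun_empty {V : Type*} [Fintype V] [DecidableEq V] (γ : ℝ) (E : Finset (Sym2 V)) :
    gfun γ E (∅ : Finset V) = 0 := by
  simp [gfun, inEdges_empty_right]

lemma cpm_ofErase {V : Type*} [Fintype V] [DecidableEq V] (γ : ℝ)
    (E : Finset (Sym2 V)) (parts₀ : Finset (Finset V)) (h1 : parts₀.SupIndep id)
    (h2 : parts₀.sup id = (univ : Finset V)) :
    cpm γ E (Finpartition.ofErase parts₀ h1 h2) = ∑ c ∈ parts₀, gfun γ E c := by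
  rw [cpm_eq]
  exact Finset.sum_erase _ (by rw [Finset.bot_eq_empty]; exact gfun_empty γ E)

lemma sum_image_sdiff {V : Type*} [Fintype V] [DecidableEq V] (γ : ℝ)
    (E : Finset (Sym2 V)) (S : Finset V) (P : Finpartition (univ : Finset V)) :
    ∑ d ∈ P.parts.image (fun c => c \ S), gfun γ E d
      = ∑ c ∈ P.parts, gfun γ E (c \ S) := by
  classical
  set T : Finset (Finset V) := P.parts.filter (fun c => (c \ S).Nonempty) with hT
  have step1 : ∑ d ∈ T.image (fun c => c \ S), gfun γ E d
      = ∑ d ∈ P.parts.image (fun c => c \ S), gfun γ E d := by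
    refine Finset.sum_subset (Finset.image_subset_image (Finset.filter_subset _ _)) ?_
    intro d hd hnd
    obtain ⟨c, hc, hcd⟩ := Finset.mem_image.1 hd
    have hcd' : c \ S = d := hcd
    by_cases hne : (c \ S).Nonempty
    · exfalso
      apply hnd
      rw [← hcd']
      exact Finset.mem_image_of_mem _ (Finset.mem_filter.2 ⟨hc, hne⟩)
    · rw [Finset.not_nonempty_iff_eq_empty] at hne
      rw [← hcd', hne]
      exact gfun_empty γ E
  have step2 : ∑ d ∈ T.image (fun c => c \ S), gfun γ E d
      = ∑ c ∈ T, gfun γ E (c \ S) := by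
    refine Finset.sum_image ?_
    intro c hc d hd h
    obtain ⟨hcp, hcne⟩ := Finset.mem_filter.1 hc
    obtain ⟨hdp, _⟩ := Finset.mem_filter.1 hd
    obtain ⟨v, hv⟩ := hcne
    have hv' : v ∈ d \ S := (show c \ S = d \ S from h) ▸ hv
    exact P.eq_of_mem_parts hcp hdp (Finset.mem_sdiff.1 hv).1 (Finset.mem_sdiff.1 hv').1
  have step3 : ∑ c ∈ T, gfun γ E (c \ S) = ∑ c ∈ P.parts, gfun γ E (c \ S) := by
    refine Finset.sum_subset (Finset.filter_subset _ _) ?_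
    intro c hc hnc
    have h0 : ¬ (c \ S).Nonempty := fun h => hnc (Finset.mem_filter.2 ⟨hc, h⟩)
    rw [Finset.not_nonempty_iff_eq_empty] at h0
    rw [h0]
    exact gfun_empty γ E
  rw [← step1, step2, step3]

lemma arith (γ α β nn μA μB : ℝ) (hγ0 : 0 < γ) (hγ1 : γ < 1)
    (hn : 1 < γ * (2 * nn - 1)) (hnn : 2 ≤ nn)
    (hα : 1 ≤ α) (hβ : 1 ≤ β) (hA : α + μA = nn) (hB : β + μB = nn)
    (hμA : 0 ≤ μA) (hμB : 0 ≤ μB)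
    (h : (1 - γ) * (α * μA) + (1 - γ) * (β * μB) + γ * (α * β) ≤ 1) : False := by
  have h1 : (α - 1) * μA ≥ 0 := mul_nonneg (by linarith) hμA
  have h2 : (β - 1) * μB ≥ 0 := mul_nonneg (by linarith) hμB
  have h3 : γ * ((α - 1) * (β - 1)) ≥ 0 :=
    mul_nonneg hγ0.le (mul_nonneg (by linarith) (by linarith))
  have key : (1 - γ) * (μA + μB) + γ * (α + β - 1) ≤ 1 := by nlinarith
  have hc1 : 0 < (1 - γ) * (2 * nn - 3) := by nlinarith
  have hc2 : 0 < γ * (2 * nn - 1) - 1 := by linarith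
  have hs2 : 0 ≤ α + β - 2 := by linarith
  have hs2n : 0 ≤ 2 * nn - (α + β) := by linarith
  rcases le_total ((1 - γ) * (2 * nn - 3)) (γ * (2 * nn - 1) - 1) with hcc | hcc
  · nlinarith [mul_nonneg hs2 (by linarith : (0:ℝ) ≤ γ * (2 * nn - 1) - 1 - (1 - γ) * (2 * nn - 3)),
      mul_nonneg hs2n (le_of_lt hc1)]
  · nlinarith [mul_nonneg hs2n (by linarith : (0:ℝ) ≤ (1 - γ) * (2 * nn - 3) - (γ * (2 * nn - 1) - 1)),
      mul_nonneg hs2 (le_of_lt hc2)]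

/-- Pair-of-Cliques axiom for CPM(γ).  Suppose `0 < γ < 1` with
`γ * (2n - 1) > 1`, and the network `N` has a component consisting of two disjoint
`n`-cliques `A` and `B` joined by the single edge `s(a₀,b₀)` (the remaining edges avoid
`A ∪ B`).  Then in every CPM(γ)-optimal clustering `Γ`, every cluster meeting `A ∪ B` is a
subset of `A` or of `B`, and `A` and `B` are themselves clusters of `Γ`. -/
theorem stmt_6 {V : Type*} [Fintype V] [DecidableEq V]
    (γ : ℝ) (hγ0 : 0 < γ) (hγ1 : γ < 1)
    (n : ℕ) (hn : 1 < γ * (2 * (n : ℝ) - 1))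
    (A B : Finset V) (hAB : Disjoint A B)
    (hAcard : A.card = n) (hBcard : B.card = n)
    (a₀ b₀ : V) (ha₀ : a₀ ∈ A) (hb₀ : b₀ ∈ B)
    (Erest : Finset (Sym2 V))
    (hrest : ∀ e ∈ Erest, ¬ e.IsDiag ∧ ∀ v ∈ e, v ∉ A ∪ B)
    (E : Finset (Sym2 V))
    (hE : E = cliqueEdges A ∪ cliqueEdges B ∪ {s(a₀, b₀)} ∪ Erest)
    (Γ : Finpartition (univ : Finset V))
    (hopt : ∀ P : Finpartition (univ : Finset V), cpm γ E P ≤ cpm γ E Γ) :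
    (∀ c ∈ Γ.parts, (c ∩ (A ∪ B)).Nonempty → c ⊆ A ∨ c ⊆ B) ∧
    A ∈ Γ.parts ∧ B ∈ Γ.parts := by
  classical
  set S : Finset V := A ∪ B with hSdef
  have ha₀S : a₀ ∈ S := Finset.mem_union_left _ ha₀
  have hb₀S : b₀ ∈ S := Finset.mem_union_right _ hb₀
  have hb₀A : b₀ ∉ A := fun h => Finset.disjoint_left.1 hAB h hb₀
  have ha₀B : a₀ ∉ B := fun h => Finset.disjoint_left.1 hAB ha₀ h
  have hn2 : 2 ≤ n := by
    by_contra h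
    push_neg at h
    interval_cases n <;> push_cast at hn <;> nlinarith
  -- edge set facts
  have hmemErest : ∀ e ∈ Erest, e ∉ cliqueEdges A ∧ e ∉ cliqueEdges B ∧ e ≠ s(a₀, b₀) := by
    intro e he
    refine ⟨fun h => ?_, fun h => ?_, fun h => ?_⟩
    · obtain ⟨v, hv⟩ := sym2_exists_mem e
      exact (hrest e he).2 v hv (Finset.mem_union_left _ ((mem_cliqueEdges.1 h).2 v hv))
    · obtain ⟨v, hv⟩ := sym2_exists_mem e
      exact (hrest e he).2 v hv (Finset.mem_union_right _ ((mem_cliqueEdges.1 h).2 v hv))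
    · subst h
      exact (hrest _ he).2 a₀ (Sym2.mem_mk_left _ _) (Finset.mem_union_left _ ha₀)
  have hdAB : Disjoint (cliqueEdges A) (cliqueEdges B) := by
    rw [Finset.disjoint_left]
    intro e heA heB
    obtain ⟨v, hv⟩ := sym2_exists_mem e
    exact Finset.disjoint_left.1 hAB ((mem_cliqueEdges.1 heA).2 v hv)
      ((mem_cliqueEdges.1 heB).2 v hv)
  have hsnA : s(a₀, b₀) ∉ cliqueEdges A :=
    fun h => hb₀A ((mem_cliqueEdges.1 h).2 b₀ (Sym2.mem_mk_right _ _))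
  have hsnB : s(a₀, b₀) ∉ cliqueEdges B :=
    fun h => ha₀B ((mem_cliqueEdges.1 h).2 a₀ (Sym2.mem_mk_left _ _))
  have hEdecomp : ∀ c : Finset V,
      (inEdges E c).card = ((A ∩ c).card.choose 2) + ((B ∩ c).card.choose 2)
        + (if a₀ ∈ c ∧ b₀ ∈ c then 1 else 0) + (inEdges Erest c).card := by
    intro c
    have d1 : Disjoint (inEdges (cliqueEdges A) c) (inEdges (cliqueEdges B) c) :=
      hdAB.mono (inEdges_subset _ _) (inEdges_subset _ _)
    have d2 : Disjoint (inEdges (cliqueEdges A ∪ cliqueEdges B) c)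
        (inEdges {s(a₀, b₀)} c) := by
      refine Disjoint.mono (inEdges_subset _ _) (inEdges_subset _ _) ?_
      rw [Finset.disjoint_singleton_right, Finset.mem_union]
      rintro (h | h)
      · exact hsnA h
      · exact hsnB h
    have d3 : Disjoint (inEdges (cliqueEdges A ∪ cliqueEdges B ∪ {s(a₀, b₀)}) c)
        (inEdges Erest c) := by
      refine Disjoint.mono (inEdges_subset _ _) (inEdges_subset _ _) ?_
      rw [Finset.disjoint_right]
      intro e he
      simp only [Finset.mem_union, Finset.mem_singleton]
      obtain ⟨h1, h2, h3⟩ := hmemErest e he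
      tauto
    rw [hE, inEdges_union, Finset.card_union_of_disjoint d3, inEdges_union,
      Finset.card_union_of_disjoint d2, inEdges_union, Finset.card_union_of_disjoint d1,
      inEdges_cliqueEdges, card_cliqueEdges, inEdges_cliqueEdges, card_cliqueEdges,
      inEdges_singleton]
  -- partition counting
  have hsum_inter : ∀ t : Finset V, ∑ c ∈ Γ.parts, (t ∩ c).card = t.card := by
    intro t
    have h1 : t = Γ.parts.biUnion (fun c => t ∩ c) := by
      ext v
      simp only [Finset.mem_biUnion, Finset.mem_inter]
      constructor
      · intro hv
        obtain ⟨c, hc, hvc⟩ := Γ.exists_mem (Finset.mem_univ v)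
        exact ⟨c, hc, hv, hvc⟩
      · rintro ⟨c, _, hv, _⟩
        exact hv
    calc ∑ c ∈ Γ.parts, (t ∩ c).card
        = (Γ.parts.biUnion (fun c => t ∩ c)).card := by
          rw [Finset.card_biUnion]
          intro c hc d hd hne
          exact (Γ.disjoint hc hd hne).mono Finset.inter_subset_right
            Finset.inter_subset_right
      _ = t.card := by rw [← h1]
  have hcardsplit : ∀ c : Finset V,
      c.card = (A ∩ c).card + (B ∩ c).card + (c \ S).card := by
    intro c
    have hc : c = (A ∩ c) ∪ ((B ∩ c) ∪ (c \ S)) := by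
      ext v
      simp only [Finset.mem_union, Finset.mem_inter, Finset.mem_sdiff, hSdef]
      constructor
      · intro hv
        by_cases hA' : v ∈ A
        · exact Or.inl ⟨hA', hv⟩
        by_cases hB' : v ∈ B
        · exact Or.inr (Or.inl ⟨hB', hv⟩)
        · exact Or.inr (Or.inr ⟨hv, by simp [Finset.mem_union, hA', hB']⟩)
      · rintro (⟨_, hv⟩ | ⟨_, hv⟩ | ⟨hv, _⟩) <;> exact hv
    have dBC : Disjoint (B ∩ c) (c \ S) := by
      rw [Finset.disjoint_left]
      intro v hv hv'
      exact (Finset.mem_sdiff.1 hv').2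
        (Finset.mem_union_right _ (Finset.mem_inter.1 hv).1)
    have dA : Disjoint (A ∩ c) ((B ∩ c) ∪ (c \ S)) := by
      rw [Finset.disjoint_union_right]
      constructor
      · exact hAB.mono Finset.inter_subset_left Finset.inter_subset_left
      · rw [Finset.disjoint_left]
        intro v hv hv'
        exact (Finset.mem_sdiff.1 hv').2
          (Finset.mem_union_left _ (Finset.mem_inter.1 hv).1)
    conv_lhs => rw [hc]
    rw [Finset.card_union_of_disjoint dA, Finset.card_union_of_disjoint dBC, add_assoc]
  -- the modified partition
  have hAneB : A ≠ B := fun h => hb₀A (h ▸ hb₀)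
  have hAim : A ∉ Γ.parts.image (fun c => c \ S) := by
    intro h
    obtain ⟨c, _, hc⟩ := Finset.mem_image.1 h
    have hc' : c \ S = A := hc
    have : a₀ ∈ c \ S := by rw [hc']; exact ha₀
    exact (Finset.mem_sdiff.1 this).2 ha₀S
  have hBim : B ∉ Γ.parts.image (fun c => c \ S) := by
    intro h
    obtain ⟨c, _, hc⟩ := Finset.mem_image.1 h
    have hc' : c \ S = B := hc
    have : b₀ ∈ c \ S := by rw [hc']; exact hb₀
    exact (Finset.mem_sdiff.1 this).2 hb₀S
  have hdAsd : ∀ c : Finset V, Disjoint A (c \ S) := by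
    intro c
    rw [Finset.disjoint_left]
    intro v hv hv'
    exact (Finset.mem_sdiff.1 hv').2 (Finset.mem_union_left _ hv)
  have hdBsd : ∀ c : Finset V, Disjoint B (c \ S) := by
    intro c
    rw [Finset.disjoint_left]
    intro v hv hv'
    exact (Finset.mem_sdiff.1 hv').2 (Finset.mem_union_right _ hv)
  have hsupIndep : (insert A (insert B (Γ.parts.image (fun c => c \ S)))).SupIndep id := by
    rw [Finset.supIndep_iff_pairwiseDisjoint]
    intro x hx y hy hxy
    simp only [Finset.coe_insert, Set.mem_insert_iff, Finset.mem_coe,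
      Finset.mem_image] at hx hy
    obtain (rfl | rfl | ⟨c, hc, rfl⟩) := hx <;> obtain (rfl | rfl | ⟨d, hd, rfl⟩) := hy
    · exact absurd rfl hxy
    · exact hAB
    · exact hdAsd d
    · exact hAB.symm
    · exact absurd rfl hxy
    · exact hdBsd d
    · exact (hdAsd c).symm
    · exact (hdBsd c).symm
    · refine Disjoint.mono ?_ ?_
        (Γ.disjoint hc hd (fun h => hxy (by rw [h])))
      · exact Finset.sdiff_subset
      · exact Finset.sdiff_subset
  have hsup : (insert A (insert B (Γ.parts.image (fun c => c \ S)))).sup id = univ := by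
    refine le_antisymm (Finset.sup_le fun c _ => Finset.subset_univ c) fun v hv => ?_
    rw [Finset.mem_sup]
    by_cases hA' : v ∈ A
    · exact ⟨A, Finset.mem_insert_self _ _, hA'⟩
    by_cases hB' : v ∈ B
    · exact ⟨B, Finset.mem_insert_of_mem (Finset.mem_insert_self _ _), hB'⟩
    · obtain ⟨c, hc, hvc⟩ := Γ.exists_mem (Finset.mem_univ v)
      refine ⟨c \ S, ?_, ?_⟩
      · exact Finset.mem_insert_of_mem (Finset.mem_insert_of_mem
          (Finset.mem_image_of_mem _ hc))
      · exact Finset.mem_sdiff.2 ⟨hvc, by simp [hSdef, hA', hB']⟩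
  have hcpm' : cpm γ E (Finpartition.ofErase _ hsupIndep hsup)
      = gfun γ E A + gfun γ E B + ∑ c ∈ Γ.parts, gfun γ E (c \ S) := by
    rw [cpm_ofErase, Finset.sum_insert (by simp [hAneB, hAim]), Finset.sum_insert hBim,
      sum_image_sdiff, add_assoc]
  -- values of gfun
  have hErest_empty : ∀ c : Finset V, c ⊆ S → inEdges Erest c = ∅ := by
    intro c hcS
    rw [Finset.eq_empty_iff_forall_notMem]
    intro e he
    rw [mem_inEdges] at he
    obtain ⟨v, hv⟩ := sym2_exists_mem e
    exact (hrest e he.1).2 v hv (hcS (he.2 v hv))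
  have hgA : gfun γ E A = (n.choose 2 : ℝ) - γ * (n.choose 2) := by
    have h1 : (inEdges E A).card = n.choose 2 := by
      rw [hEdecomp A, Finset.inter_self,
        (Finset.disjoint_iff_inter_eq_empty.1 hAB.symm : B ∩ A = ∅),
        hErest_empty A Finset.subset_union_left, if_neg (fun h => hb₀A h.2)]
      simp [hAcard]
    simp only [gfun]
    rw [h1, hAcard]
  have hgB : gfun γ E B = (n.choose 2 : ℝ) - γ * (n.choose 2) := by
    have h1 : (inEdges E B).card = n.choose 2 := by
      rw [hEdecomp B, Finset.inter_self,
        (Finset.disjoint_iff_inter_eq_empty.1 hAB : A ∩ B = ∅),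
        hErest_empty B Finset.subset_union_right, if_neg (fun h => ha₀B h.1)]
      simp [hBcard]
    simp only [gfun]
    rw [h1, hBcard]
  have hgsd : ∀ c : Finset V, gfun γ E (c \ S)
      = ((inEdges Erest c).card : ℝ) - γ * (((c \ S).card).choose 2) := by
    intro c
    have h3 : inEdges Erest (c \ S) = inEdges Erest c := by
      ext e
      rw [mem_inEdges, mem_inEdges]
      constructor
      · rintro ⟨he, h⟩
        exact ⟨he, fun v hv => (Finset.mem_sdiff.1 (h v hv)).1⟩
      · rintro ⟨he, h⟩
        exact ⟨he, fun v hv => Finset.mem_sdiff.2 ⟨h v hv, (hrest e he).2 v hv⟩⟩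
    have h1 : (inEdges E (c \ S)).card = (inEdges Erest c).card := by
      rw [hEdecomp (c \ S)]
      have e1 : A ∩ (c \ S) = ∅ := Finset.disjoint_iff_inter_eq_empty.1 (hdAsd c)
      have e2 : B ∩ (c \ S) = ∅ := Finset.disjoint_iff_inter_eq_empty.1 (hdBsd c)
      have e3 : a₀ ∉ c \ S := fun h => (Finset.mem_sdiff.1 h).2 ha₀S
      rw [e1, e2, h3, if_neg (fun h => e3 h.1)]
      simp
    simp only [gfun]
    rw [h1]
  -- per-part value
  have hgpart : ∀ c : Finset V, gfun γ E c
      = ((A ∩ c).card.choose 2 : ℝ) + ((B ∩ c).card.choose 2 : ℝ)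
        + (if a₀ ∈ c ∧ b₀ ∈ c then (1:ℝ) else 0) + ((inEdges Erest c).card : ℝ)
        - γ * (((A ∩ c).card.choose 2 : ℝ) + ((B ∩ c).card.choose 2 : ℝ)
          + ((A ∩ c).card : ℝ) * ((B ∩ c).card : ℝ)
          + (((A ∩ c).card : ℝ) + ((B ∩ c).card : ℝ)) * ((c \ S).card : ℝ)
          + ((c \ S).card.choose 2 : ℝ)) := by
    intro c
    have h2 : c.card.choose 2 = (A ∩ c).card.choose 2 + (B ∩ c).card.choose 2
        + (A ∩ c).card * (B ∩ c).card + ((A ∩ c).card + (B ∩ c).card) * (c \ S).card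
        + (c \ S).card.choose 2 := by
      rw [hcardsplit c, choose2_add, choose2_add]
      ring
    simp only [gfun]
    rw [hEdecomp c, h2]
    push_cast
    ring
  -- the optimality inequality
  have hineq : (1 - γ) * ((n.choose 2 : ℝ) - ∑ c ∈ Γ.parts, ((A ∩ c).card.choose 2 : ℝ))
      + (1 - γ) * ((n.choose 2 : ℝ) - ∑ c ∈ Γ.parts, ((B ∩ c).card.choose 2 : ℝ))
      + γ * (∑ c ∈ Γ.parts, ((A ∩ c).card : ℝ) * ((B ∩ c).card : ℝ))
      + γ * (∑ c ∈ Γ.parts, (((A ∩ c).card : ℝ) + ((B ∩ c).card : ℝ)) * ((c \ S).card : ℝ))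
      ≤ ∑ c ∈ Γ.parts, (if a₀ ∈ c ∧ b₀ ∈ c then (1:ℝ) else 0) := by
    have h := hopt (Finpartition.ofErase _ hsupIndep hsup)
    rw [hcpm', cpm_eq, hgA, hgB,
      Finset.sum_congr rfl (fun c _ => hgsd c),
      Finset.sum_congr rfl (fun c _ => hgpart c)] at h
    simp only [Finset.sum_sub_distrib, Finset.sum_add_distrib, ← Finset.mul_sum] at h
    ring_nf at h ⊢
    linarith
  -- counting facts
  have hfa_sum : ∑ c ∈ Γ.parts, (A ∩ c).card = n := by rw [hsum_inter A, hAcard]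
  have hfb_sum : ∑ c ∈ Γ.parts, (B ∩ c).card = n := by rw [hsum_inter B, hBcard]
  have hboundA : ∀ c₀ ∈ Γ.parts, (∑ c ∈ Γ.parts, ((A ∩ c).card.choose 2))
      + (A ∩ c₀).card * (n - (A ∩ c₀).card) ≤ n.choose 2 := by
    intro c₀ hc₀
    have h := sum_choose2_bound Γ.parts (fun c => (A ∩ c).card) hc₀
    rwa [hfa_sum] at h
  have hboundB : ∀ c₀ ∈ Γ.parts, (∑ c ∈ Γ.parts, ((B ∩ c).card.choose 2))
      + (B ∩ c₀).card * (n - (B ∩ c₀).card) ≤ n.choose 2 := by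
    intro c₀ hc₀
    have h := sum_choose2_bound Γ.parts (fun c => (B ∩ c).card) hc₀
    rwa [hfb_sum] at h
  have hc₀ : Γ.part a₀ ∈ Γ.parts := Γ.part_mem.2 (Finset.mem_univ a₀)
  have ha₀c₀ : a₀ ∈ Γ.part a₀ := Γ.mem_part (Finset.mem_univ a₀)
  by_cases hbc : b₀ ∈ Γ.part a₀
  · -- mixed cluster: contradiction
    exfalso
    have hSe : ∑ c ∈ Γ.parts, (if a₀ ∈ c ∧ b₀ ∈ c then (1:ℝ) else 0) = 1 := by
      rw [Finset.sum_eq_single_of_mem (Γ.part a₀) hc₀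
        (fun c hc hne => if_neg (fun hcontra =>
          hne (Γ.eq_of_mem_parts hc hc₀ hcontra.1 ha₀c₀))),
        if_pos ⟨ha₀c₀, hbc⟩]
    have hα1 : 1 ≤ (A ∩ Γ.part a₀).card :=
      Finset.card_pos.2 ⟨a₀, Finset.mem_inter.2 ⟨ha₀, ha₀c₀⟩⟩
    have hβ1 : 1 ≤ (B ∩ Γ.part a₀).card :=
      Finset.card_pos.2 ⟨b₀, Finset.mem_inter.2 ⟨hb₀, hbc⟩⟩
    have hαn : (A ∩ Γ.part a₀).card ≤ n :=
      hAcard ▸ Finset.card_le_card Finset.inter_subset_left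
    have hβn : (B ∩ Γ.part a₀).card ≤ n :=
      hBcard ▸ Finset.card_le_card Finset.inter_subset_left
    have hbAr : (∑ c ∈ Γ.parts, ((A ∩ c).card.choose 2 : ℝ))
        + ((A ∩ Γ.part a₀).card : ℝ) * ((n : ℝ) - ((A ∩ Γ.part a₀).card : ℝ))
        ≤ (n.choose 2 : ℝ) := by
      have h := (Nat.cast_le (α := ℝ)).2 (hboundA _ hc₀)
      push_cast [Nat.cast_sub hαn] at h
      linarith
    have hbBr : (∑ c ∈ Γ.parts, ((B ∩ c).card.choose 2 : ℝ))
        + ((B ∩ Γ.part a₀).card : ℝ) * ((n : ℝ) - ((B ∩ Γ.part a₀).card : ℝ))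
        ≤ (n.choose 2 : ℝ) := by
      have h := (Nat.cast_le (α := ℝ)).2 (hboundB _ hc₀)
      push_cast [Nat.cast_sub hβn] at h
      linarith
    have hSab : ((A ∩ Γ.part a₀).card : ℝ) * ((B ∩ Γ.part a₀).card : ℝ)
        ≤ ∑ c ∈ Γ.parts, ((A ∩ c).card : ℝ) * ((B ∩ c).card : ℝ) :=
      Finset.single_le_sum (f := fun c => ((A ∩ c).card : ℝ) * ((B ∩ c).card : ℝ))
        (fun c _ => mul_nonneg (Nat.cast_nonneg _) (Nat.cast_nonneg _)) hc₀
    have hSr : (0:ℝ) ≤ ∑ c ∈ Γ.parts,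
        (((A ∩ c).card : ℝ) + ((B ∩ c).card : ℝ)) * ((c \ S).card : ℝ) :=
      Finset.sum_nonneg (fun c _ => mul_nonneg (add_nonneg (Nat.cast_nonneg _) (Nat.cast_nonneg _)) (Nat.cast_nonneg _))
    refine arith γ ((A ∩ Γ.part a₀).card) ((B ∩ Γ.part a₀).card) n
      ((n : ℝ) - ((A ∩ Γ.part a₀).card : ℝ)) ((n : ℝ) - ((B ∩ Γ.part a₀).card : ℝ))
      hγ0 hγ1 hn (by exact_mod_cast hn2) (by exact_mod_cast hα1) (by exact_mod_cast hβ1)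
      (by ring) (by ring) ?_ ?_ ?_
    · have : ((A ∩ Γ.part a₀).card : ℝ) ≤ (n : ℝ) := by exact_mod_cast hαn
      linarith
    · have : ((B ∩ Γ.part a₀).card : ℝ) ≤ (n : ℝ) := by exact_mod_cast hβn
      linarith
    · have k1 : (1-γ) * (((A ∩ Γ.part a₀).card : ℝ) * ((n:ℝ) - ((A ∩ Γ.part a₀).card : ℝ)))
          ≤ (1-γ) * ((n.choose 2 : ℝ) - ∑ c ∈ Γ.parts, ((A ∩ c).card.choose 2 : ℝ)) :=
        mul_le_mul_of_nonneg_left (by linarith) (by linarith)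
      have k2 : (1-γ) * (((B ∩ Γ.part a₀).card : ℝ) * ((n:ℝ) - ((B ∩ Γ.part a₀).card : ℝ)))
          ≤ (1-γ) * ((n.choose 2 : ℝ) - ∑ c ∈ Γ.parts, ((B ∩ c).card.choose 2 : ℝ)) :=
        mul_le_mul_of_nonneg_left (by linarith) (by linarith)
      have k3 : γ * (((A ∩ Γ.part a₀).card : ℝ) * ((B ∩ Γ.part a₀).card : ℝ))
          ≤ γ * (∑ c ∈ Γ.parts, ((A ∩ c).card : ℝ) * ((B ∩ c).card : ℝ)) :=
        mul_le_mul_of_nonneg_left hSab hγ0.le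
      have k4 : (0:ℝ) ≤ γ * (∑ c ∈ Γ.parts,
          (((A ∩ c).card : ℝ) + ((B ∩ c).card : ℝ)) * ((c \ S).card : ℝ)) :=
        mul_nonneg hγ0.le hSr
      linarith [hineq, hSe]
  · -- structure case
    have hSe : ∑ c ∈ Γ.parts, (if a₀ ∈ c ∧ b₀ ∈ c then (1:ℝ) else 0) = 0 := by
      refine Finset.sum_eq_zero ?_
      intro c hc
      refine if_neg ?_
      rintro ⟨h1, h2⟩
      exact hbc ((Γ.eq_of_mem_parts hc hc₀ h1 ha₀c₀) ▸ h2)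
    have hXA : (0:ℝ) ≤ (n.choose 2 : ℝ) - ∑ c ∈ Γ.parts, ((A ∩ c).card.choose 2 : ℝ) := by
      have h := sum_choose2_le Γ.parts (fun c => (A ∩ c).card)
      rw [hfa_sum] at h
      have h' := (Nat.cast_le (α := ℝ)).2 h
      push_cast at h'
      linarith
    have hXB : (0:ℝ) ≤ (n.choose 2 : ℝ) - ∑ c ∈ Γ.parts, ((B ∩ c).card.choose 2 : ℝ) := by
      have h := sum_choose2_le Γ.parts (fun c => (B ∩ c).card)
      rw [hfb_sum] at h
      have h' := (Nat.cast_le (α := ℝ)).2 h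
      push_cast at h'
      linarith
    have hSab0 : (0:ℝ) ≤ ∑ c ∈ Γ.parts, ((A ∩ c).card : ℝ) * ((B ∩ c).card : ℝ) :=
      Finset.sum_nonneg (fun c _ => mul_nonneg (Nat.cast_nonneg _) (Nat.cast_nonneg _))
    have hSr0 : (0:ℝ) ≤ ∑ c ∈ Γ.parts,
        (((A ∩ c).card : ℝ) + ((B ∩ c).card : ℝ)) * ((c \ S).card : ℝ) :=
      Finset.sum_nonneg (fun c _ => mul_nonneg (add_nonneg (Nat.cast_nonneg _) (Nat.cast_nonneg _)) (Nat.cast_nonneg _))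
    have h1γ : (0:ℝ) < 1 - γ := by linarith
    have p1 := mul_nonneg h1γ.le hXA
    have p2 := mul_nonneg h1γ.le hXB
    have p3 := mul_nonneg hγ0.le hSab0
    have p4 := mul_nonneg hγ0.le hSr0
    have q1 : (1-γ) * ((n.choose 2 : ℝ) - ∑ c ∈ Γ.parts, ((A ∩ c).card.choose 2 : ℝ)) = 0 := by
      linarith [hineq, hSe]
    have q2 : (1-γ) * ((n.choose 2 : ℝ) - ∑ c ∈ Γ.parts, ((B ∩ c).card.choose 2 : ℝ)) = 0 := by
      linarith [hineq, hSe]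
    have q3 : γ * (∑ c ∈ Γ.parts, ((A ∩ c).card : ℝ) * ((B ∩ c).card : ℝ)) = 0 := by
      linarith [hineq, hSe]
    have q4 : γ * (∑ c ∈ Γ.parts,
        (((A ∩ c).card : ℝ) + ((B ∩ c).card : ℝ)) * ((c \ S).card : ℝ)) = 0 := by
      linarith [hineq, hSe]
    have hZA : (n.choose 2 : ℝ) - ∑ c ∈ Γ.parts, ((A ∩ c).card.choose 2 : ℝ) = 0 :=
      (mul_eq_zero.1 q1).resolve_left (ne_of_gt h1γ)
    have hZB : (n.choose 2 : ℝ) - ∑ c ∈ Γ.parts, ((B ∩ c).card.choose 2 : ℝ) = 0 :=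
      (mul_eq_zero.1 q2).resolve_left (ne_of_gt h1γ)
    have hZab_r : (∑ c ∈ Γ.parts, ((A ∩ c).card : ℝ) * ((B ∩ c).card : ℝ)) = 0 :=
      (mul_eq_zero.1 q3).resolve_left (ne_of_gt hγ0)
    have hZr_r : (∑ c ∈ Γ.parts,
        (((A ∩ c).card : ℝ) + ((B ∩ c).card : ℝ)) * ((c \ S).card : ℝ)) = 0 :=
      (mul_eq_zero.1 q4).resolve_left (ne_of_gt hγ0)
    -- nat versions
    have hZab : ∑ c ∈ Γ.parts, (A ∩ c).card * (B ∩ c).card = 0 := by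
      have h : ((∑ c ∈ Γ.parts, (A ∩ c).card * (B ∩ c).card : ℕ) : ℝ) = 0 := by
        push_cast
        exact hZab_r
      exact_mod_cast h
    have hZr : ∑ c ∈ Γ.parts, ((A ∩ c).card + (B ∩ c).card) * (c \ S).card = 0 := by
      have h : ((∑ c ∈ Γ.parts, ((A ∩ c).card + (B ∩ c).card) * (c \ S).card : ℕ) : ℝ) = 0 := by
        push_cast
        exact hZr_r
      exact_mod_cast h
    have hZAn : ∑ c ∈ Γ.parts, ((A ∩ c).card.choose 2) = n.choose 2 := by
      have h : ((∑ c ∈ Γ.parts, ((A ∩ c).card.choose 2) : ℕ) : ℝ) = ((n.choose 2 : ℕ) : ℝ) := by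
        push_cast
        linarith [hZA]
      exact_mod_cast h
    have hZBn : ∑ c ∈ Γ.parts, ((B ∩ c).card.choose 2) = n.choose 2 := by
      have h : ((∑ c ∈ Γ.parts, ((B ∩ c).card.choose 2) : ℕ) : ℝ) = ((n.choose 2 : ℕ) : ℝ) := by
        push_cast
        linarith [hZB]
      exact_mod_cast h
    have habz : ∀ c ∈ Γ.parts, (A ∩ c).card * (B ∩ c).card = 0 :=
      fun c hc => (Finset.sum_eq_zero_iff.1 hZab) c hc
    have hrz : ∀ c ∈ Γ.parts, ((A ∩ c).card + (B ∩ c).card) * (c \ S).card = 0 :=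
      fun c hc => (Finset.sum_eq_zero_iff.1 hZr) c hc
    -- conclusion 1
    have part1 : ∀ c ∈ Γ.parts, (c ∩ S).Nonempty → c ⊆ A ∨ c ⊆ B := by
      intro c hc hne
      obtain ⟨v, hv⟩ := hne
      obtain ⟨hvc, hvS⟩ := Finset.mem_inter.1 hv
      have habc := habz c hc
      have hrc := hrz c hc
      rcases Finset.mem_union.1 hvS with hvA | hvB
      · left
        have hA1 : 0 < (A ∩ c).card :=
          Finset.card_pos.2 ⟨v, Finset.mem_inter.2 ⟨hvA, hvc⟩⟩
        have hB0 : (B ∩ c).card = 0 := by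
          rcases Nat.mul_eq_zero.1 habc with h | h
          · omega
          · exact h
        have hr0 : (c \ S).card = 0 := by
          rcases Nat.mul_eq_zero.1 hrc with h | h
          · omega
          · exact h
        intro w hw
        have hwS : w ∈ S := by
          by_contra hws
          have hmem : w ∈ c \ S := Finset.mem_sdiff.2 ⟨hw, hws⟩
          rw [Finset.card_eq_zero.1 hr0] at hmem
          exact absurd hmem (Finset.notMem_empty w)
        rcases Finset.mem_union.1 hwS with h | h
        · exact h
        · exfalso
          have hmem : w ∈ B ∩ c := Finset.mem_inter.2 ⟨h, hw⟩
          rw [Finset.card_eq_zero.1 hB0] at hmem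
          exact absurd hmem (Finset.notMem_empty w)
      · right
        have hB1 : 0 < (B ∩ c).card :=
          Finset.card_pos.2 ⟨v, Finset.mem_inter.2 ⟨hvB, hvc⟩⟩
        have hA0 : (A ∩ c).card = 0 := by
          rcases Nat.mul_eq_zero.1 habc with h | h
          · exact h
          · omega
        have hr0 : (c \ S).card = 0 := by
          rcases Nat.mul_eq_zero.1 hrc with h | h
          · omega
          · exact h
        intro w hw
        have hwS : w ∈ S := by
          by_contra hws
          have hmem : w ∈ c \ S := Finset.mem_sdiff.2 ⟨hw, hws⟩
          rw [Finset.card_eq_zero.1 hr0] at hmem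
          exact absurd hmem (Finset.notMem_empty w)
        rcases Finset.mem_union.1 hwS with h | h
        · exfalso
          have hmem : w ∈ A ∩ c := Finset.mem_inter.2 ⟨h, hw⟩
          rw [Finset.card_eq_zero.1 hA0] at hmem
          exact absurd hmem (Finset.notMem_empty w)
        · exact h
    -- A is a part
    have hc₀A : Γ.part a₀ ⊆ A := by
      rcases part1 _ hc₀ ⟨a₀, Finset.mem_inter.2 ⟨ha₀c₀, ha₀S⟩⟩ with h | h
      · exact h
      · exact absurd (h ha₀c₀) ha₀B
    have hα1 : 1 ≤ (A ∩ Γ.part a₀).card :=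
      Finset.card_pos.2 ⟨a₀, Finset.mem_inter.2 ⟨ha₀, ha₀c₀⟩⟩
    have hαn : (A ∩ Γ.part a₀).card ≤ n :=
      hAcard ▸ Finset.card_le_card Finset.inter_subset_left
    have hbA := hboundA _ hc₀
    rw [hZAn] at hbA
    have hprodA : (A ∩ Γ.part a₀).card * (n - (A ∩ Γ.part a₀).card) = 0 := by
      nth_rewrite 2 [← Nat.add_zero (n.choose 2)] at hbA
      exact Nat.le_zero.1 (Nat.le_of_add_le_add_left hbA)
    have hαeq : (A ∩ Γ.part a₀).card = n := by
      rcases Nat.mul_eq_zero.1 hprodA with h | h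
      · omega
      · omega
    have hAc₀ : A ∩ Γ.part a₀ = A :=
      Finset.eq_of_subset_of_card_le Finset.inter_subset_left (by rw [hαeq, hAcard])
    have hAsub : A ⊆ Γ.part a₀ := by
      intro v hv
      have hv' : v ∈ A ∩ Γ.part a₀ := by rw [hAc₀]; exact hv
      exact (Finset.mem_inter.1 hv').2
    have hAeq : Γ.part a₀ = A := Finset.Subset.antisymm hc₀A hAsub
    -- B is a part
    have hc₁ : Γ.part b₀ ∈ Γ.parts := Γ.part_mem.2 (Finset.mem_univ b₀)
    have hb₀c₁ : b₀ ∈ Γ.part b₀ := Γ.mem_part (Finset.mem_univ b₀)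
    have hc₁B : Γ.part b₀ ⊆ B := by
      rcases part1 _ hc₁ ⟨b₀, Finset.mem_inter.2 ⟨hb₀c₁, hb₀S⟩⟩ with h | h
      · exact absurd (h hb₀c₁) hb₀A
      · exact h
    have hβ1 : 1 ≤ (B ∩ Γ.part b₀).card :=
      Finset.card_pos.2 ⟨b₀, Finset.mem_inter.2 ⟨hb₀, hb₀c₁⟩⟩
    have hβn : (B ∩ Γ.part b₀).card ≤ n :=
      hBcard ▸ Finset.card_le_card Finset.inter_subset_left
    have hbB := hboundB _ hc₁
    rw [hZBn] at hbB
    have hprodB : (B ∩ Γ.part b₀).card * (n - (B ∩ Γ.part b₀).card) = 0 := by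
      nth_rewrite 2 [← Nat.add_zero (n.choose 2)] at hbB
      exact Nat.le_zero.1 (Nat.le_of_add_le_add_left hbB)
    have hβeq : (B ∩ Γ.part b₀).card = n := by
      rcases Nat.mul_eq_zero.1 hprodB with h | h
      · omega
      · omega
    have hBc₁ : B ∩ Γ.part b₀ = B :=
      Finset.eq_of_subset_of_card_le Finset.inter_subset_left (by rw [hβeq, hBcard])
    have hBsub : B ⊆ Γ.part b₀ := by
      intro v hv
      have hv' : v ∈ B ∩ Γ.part b₀ := by rw [hBc₁]; exact hv
      exact (Finset.mem_inter.1 hv').2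
    have hBeq : Γ.part b₀ = B := Finset.Subset.antisymm hc₁B hBsub
    exact ⟨part1, hAeq ▸ hc₀, hBeq ▸ hc₁⟩
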